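/- Let n ≥ 1, let r, r' ∈ ℝⁿ with r₁ ≥ … ≥ r_n ≥ 0 and r'₁ ≥ … ≥ r'_n ≥ 0, and let S be a real symplectic 2n×2n matrix (S σ_n Sᵀ = σ_n). If Sᵀ · c(r) · S − c(r') is positive semidefinite, then r_k ≥ r'_k for every k = 1, …, n. -/

import Mathlib

open Matrix

/-- The standard symplectic form `σ_n = ⊕_{i=1}^n [[0,-1],[1,0]]` on `ℝ^{2n}`. -/
noncomputable def symp (m : ℕ) : Matrix (Fin (2 * m)) (Fin (2 * m)) ℝ :=
  Matrix.of fun i j =>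
    if i.val = j.val + 1 ∧ i.val % 2 = 1 then 1
    else if j.val = i.val + 1 ∧ j.val % 2 = 1 then -1 else 0

/-- `c(r) = ⊕_k cosh(r_k)·I₂`. -/
noncomputable def cmat {n : ℕ} (r : Fin n → ℝ) : Matrix (Fin (2 * n)) (Fin (2 * n)) ℝ :=
  Matrix.diagonal fun i => Real.cosh (r ⟨i.val / 2, by have := i.isLt; omega⟩)

namespace SympAux

def sympR (R : Type*) [Ring R] (m : ℕ) : Matrix (Fin (2 * m)) (Fin (2 * m)) R :=
  Matrix.of fun i j =>
    if i.val = j.val + 1 ∧ i.val % 2 = 1 then 1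
    else if j.val = i.val + 1 ∧ j.val % 2 = 1 then -1 else 0

lemma symp_eq (m : ℕ) : symp m = sympR ℝ m := rfl

lemma sympR_apply {R : Type*} [Ring R] {m : ℕ} (i j : Fin (2 * m)) :
    sympR R m i j = if i.val = j.val + 1 ∧ i.val % 2 = 1 then 1
      else if j.val = i.val + 1 ∧ j.val % 2 = 1 then -1 else 0 := rfl

lemma sympR_one {R : Type*} [Ring R] {m : ℕ} {i j : Fin (2 * m)}
    (h1 : i.val = j.val + 1) (h2 : i.val % 2 = 1) : sympR R m i j = 1 := by
  rw [sympR_apply, if_pos ⟨h1, h2⟩]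

lemma sympR_negone {R : Type*} [Ring R] {m : ℕ} {i j : Fin (2 * m)}
    (h1 : j.val = i.val + 1) (h2 : j.val % 2 = 1) : sympR R m i j = -1 := by
  rw [sympR_apply, if_neg (by omega), if_pos ⟨h1, h2⟩]

lemma sympR_zero {R : Type*} [Ring R] {m : ℕ} {i j : Fin (2 * m)}
    (h1 : ¬(i.val = j.val + 1 ∧ i.val % 2 = 1))
    (h2 : ¬(j.val = i.val + 1 ∧ j.val % 2 = 1)) : sympR R m i j = 0 := by
  rw [sympR_apply, if_neg h1, if_neg h2]

lemma sympR_map {R R' : Type*} [Ring R] [Ring R'] (f : R →+* R') (m : ℕ) :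
    (sympR R m).map f = sympR R' m := by
  ext i j
  rw [Matrix.map_apply, sympR_apply, sympR_apply]
  split_ifs <;> simp

def e0 {n : ℕ} (j : Fin n) : Fin (2 * n) := ⟨2 * j.val, by have := j.isLt; omega⟩
def e1 {n : ℕ} (j : Fin n) : Fin (2 * n) := ⟨2 * j.val + 1, by have := j.isLt; omega⟩

def pairEquiv (n : ℕ) : Fin n × Fin 2 ≃ Fin (2 * n) where
  toFun p := ⟨2 * p.1.val + p.2.val, by have := p.1.isLt; have := p.2.isLt; omega⟩
  invFun i := (⟨i.val / 2, by have := i.isLt; omega⟩, ⟨i.val % 2, by omega⟩)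
  left_inv p := by
    have := p.2.isLt
    ext <;> simp <;> omega
  right_inv i := by
    ext
    simp
    omega

lemma sum_pair {M : Type*} [AddCommMonoid M] {n : ℕ} (f : Fin (2 * n) → M) :
    ∑ i, f i = ∑ j : Fin n, (f (e0 j) + f (e1 j)) := by
  rw [← Equiv.sum_comp (pairEquiv n) f, Fintype.sum_prod_type]
  refine Finset.sum_congr rfl fun j _ => ?_
  rw [Fin.sum_univ_two]
  have h0 : pairEquiv n (j, 0) = e0 j := by
    apply Fin.ext; simp [pairEquiv, e0]
  have h1 : pairEquiv n (j, 1) = e1 j := by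
    apply Fin.ext; simp [pairEquiv, e1]
  rw [h0, h1]

lemma sympR_mulVec {R : Type*} [CommRing R] {m : ℕ} (w : Fin (2 * m) → R) (i : Fin (2 * m)) :
    (sympR R m *ᵥ w) i =
      if h : i.val % 2 = 1 then w ⟨i.val - 1, by have := i.isLt; omega⟩
      else -w ⟨i.val + 1, by have := i.isLt; omega⟩ := by
  have hlt := i.isLt
  show ∑ k, sympR R m i k * w k = _
  split_ifs with hodd
  · rw [Finset.sum_eq_single (⟨i.val - 1, by omega⟩ : Fin (2 * m))]
    · rw [sympR_one (by show i.val = (i.val - 1) + 1; omega) hodd, one_mul]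
    · intro k _ hk
      have hkv : (k : ℕ) ≠ i.val - 1 := fun h => hk (Fin.ext h)
      rw [sympR_zero (by omega) (by omega), zero_mul]
    · simp
  · rw [Finset.sum_eq_single (⟨i.val + 1, by omega⟩ : Fin (2 * m))]
    · rw [sympR_negone (by show i.val + 1 = i.val + 1; rfl) (by show (i.val + 1) % 2 = 1; omega),
        neg_one_mul]
    · intro k _ hk
      have hkv : (k : ℕ) ≠ i.val + 1 := fun h => hk (Fin.ext h)
      rw [sympR_zero (by omega) (by omega), zero_mul]
    · simp

lemma sympR_mul_self {R : Type*} [CommRing R] (m : ℕ) :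
    sympR R m * sympR R m = -1 := by
  ext i j
  have hlt := i.isLt
  have hjlt := j.isLt
  rw [Matrix.mul_apply]
  have goalval : (-1 : Matrix (Fin (2*m)) (Fin (2*m)) R) i j
      = if i = j then -1 else 0 := by
    simp [Matrix.one_apply]
    split_ifs <;> simp
  rw [goalval]
  rcases Nat.even_or_odd i.val with he | ho
  · have hi1 : i.val % 2 = 0 := Nat.even_iff.mp he
    have hodd : ¬ (i.val % 2 = 1) := by omega
    rw [Finset.sum_eq_single (⟨i.val + 1, by omega⟩ : Fin (2 * m))]
    · have h1 : sympR R m i ⟨i.val + 1, by omega⟩ = -1 :=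
        sympR_negone (by show i.val + 1 = i.val + 1; rfl) (by show (i.val+1) % 2 = 1; omega)
      have h2 : sympR R m (⟨i.val + 1, by omega⟩ : Fin (2 * m)) j =
          if i = j then 1 else 0 := by
        by_cases hij : i = j
        · rw [if_pos hij]
          exact sympR_one (by show i.val + 1 = j.val + 1; rw [hij]) (by show (i.val+1)%2 = 1; omega)
        · rw [if_neg hij]
          have hne : i.val ≠ j.val := fun h => hij (Fin.ext h)
          exact sympR_zero (by show ¬(i.val + 1 = j.val + 1 ∧ _); omega)
            (by show ¬(j.val = i.val + 1 + 1 ∧ j.val % 2 = 1)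
                intro ⟨ha, hb⟩; omega)
      rw [h1, h2]
      split_ifs <;> ring
    · intro k _ hk
      have hkv : (k : ℕ) ≠ i.val + 1 := fun h => hk (Fin.ext h)
      rw [sympR_zero (by omega) (by omega), zero_mul]
    · simp
  · have hodd : i.val % 2 = 1 := by rcases ho with ⟨c, hc⟩; omega
    rw [Finset.sum_eq_single (⟨i.val - 1, by omega⟩ : Fin (2 * m))]
    · have h1 : sympR R m i ⟨i.val - 1, by omega⟩ = 1 :=
        sympR_one (by show i.val = i.val - 1 + 1; omega) hodd
      have h2 : sympR R m (⟨i.val - 1, by omega⟩ : Fin (2 * m)) j =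
          if i = j then -1 else 0 := by
        by_cases hij : i = j
        · rw [if_pos hij]
          exact sympR_negone (by show j.val = i.val - 1 + 1; rw [← hij]; omega)
            (by show j.val % 2 = 1; rw [← hij]; omega)
        · rw [if_neg hij]
          have hne : i.val ≠ j.val := fun h => hij (Fin.ext h)
          exact sympR_zero
            (by show ¬(i.val - 1 = j.val + 1 ∧ (i.val - 1) % 2 = 1); intro ⟨ha, hb⟩; omega)
            (by show ¬(j.val = i.val - 1 + 1 ∧ j.val % 2 = 1); intro ⟨ha, hb⟩; omega)
      rw [h1, h2, one_mul]
    · intro k _ hk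
      have hkv : (k : ℕ) ≠ i.val - 1 := fun h => hk (Fin.ext h)
      rw [sympR_zero (by omega) (by omega), zero_mul]
    · simp

lemma transpose_symplectic {n : ℕ} (S : Matrix (Fin (2 * n)) (Fin (2 * n)) ℝ)
    (hS : S * symp n * Sᵀ = symp n) : Sᵀ * symp n * S = symp n := by
  rw [symp_eq] at *
  set σ := sympR ℝ n with hσ
  have hσσ : σ * σ = -1 := sympR_mul_self n
  have h3 : S * -(σ * Sᵀ * σ) = 1 := by
    calc S * -(σ * Sᵀ * σ) = -(S * σ * Sᵀ * σ) := by noncomm_ring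
    _ = -(σ * σ) := by rw [hS]
    _ = 1 := by rw [hσσ]; simp
  have h4 : -(σ * Sᵀ * σ) * S = 1 := mul_eq_one_comm.mp h3
  have h5 : σ * (-(σ * Sᵀ * σ) * S) = σ := by rw [h4, Matrix.mul_one]
  calc Sᵀ * σ * S = -(-1 : Matrix (Fin (2*n)) (Fin (2*n)) ℝ) * (Sᵀ * σ * S) := by simp
  _ = -(σ * σ) * (Sᵀ * σ * S) := by rw [hσσ]
  _ = σ * (-(σ * Sᵀ * σ) * S) := by noncomm_ring
  _ = σ := h5

@[simp] lemma e0_val {n : ℕ} (j : Fin n) : (e0 j).val = 2 * j.val := rfl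
@[simp] lemma e1_val {n : ℕ} (j : Fin n) : (e1 j).val = 2 * j.val + 1 := rfl

lemma nsq_pair (w0 w1 : ℂ) :
    Complex.normSq (w0 - Complex.I * w1) + Complex.normSq (w0 + Complex.I * w1)
      = 2 * (Complex.normSq w0 + Complex.normSq w1) := by
  simp [Complex.normSq_apply, Complex.mul_re, Complex.mul_im, Complex.sub_re, Complex.sub_im,
    Complex.add_re, Complex.add_im, Complex.I_re, Complex.I_im]
  ring

lemma omega_pair (w0 w1 : ℂ) :
    2 * ((starRingEnd ℂ) w1 * w0 - (starRingEnd ℂ) w0 * w1)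
      = -Complex.I * (((Complex.normSq (w0 - Complex.I * w1) : ℝ) : ℂ)
          - ((Complex.normSq (w0 + Complex.I * w1) : ℝ) : ℂ)) := by
  apply Complex.ext <;>
    simp [Complex.normSq_apply, Complex.mul_re, Complex.mul_im, Complex.sub_re, Complex.sub_im,
      Complex.add_re, Complex.add_im] <;> ring

lemma sympC_mulVec_e0 {n : ℕ} (w : Fin (2 * n) → ℂ) (j : Fin n) :
    (sympR ℂ n *ᵥ w) (e0 j) = -w (e1 j) := by
  rw [sympR_mulVec, dif_neg (by simp)]
  congr 1

lemma sympC_mulVec_e1 {n : ℕ} (w : Fin (2 * n) → ℂ) (j : Fin n) :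
    (sympR ℂ n *ᵥ w) (e1 j) = w (e0 j) := by
  rw [sympR_mulVec, dif_pos (by simp [Nat.add_mod])]
  congr 1

lemma omega_block {n : ℕ} (w : Fin (2 * n) → ℂ) :
    star w ⬝ᵥ (sympR ℂ n *ᵥ w)
      = ∑ j : Fin n, ((starRingEnd ℂ) (w (e1 j)) * w (e0 j)
          - (starRingEnd ℂ) (w (e0 j)) * w (e1 j)) := by
  show (∑ i, star w i * (sympR ℂ n *ᵥ w) i) = _
  rw [sum_pair (f := fun i => star w i * (sympR ℂ n *ᵥ w) i)]
  refine Finset.sum_congr rfl fun j _ => ?_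
  rw [sympC_mulVec_e0, sympC_mulVec_e1]
  simp [Pi.star_apply, Complex.star_def]
  ring

lemma omega_invariant {n : ℕ} (Sc : Matrix (Fin (2 * n)) (Fin (2 * n)) ℂ)
    (hSc : Scᵀ * sympR ℂ n * Sc = sympR ℂ n) (hH : Scᴴ = Scᵀ) (x : Fin (2 * n) → ℂ) :
    star (Sc *ᵥ x) ⬝ᵥ (sympR ℂ n *ᵥ (Sc *ᵥ x)) = star x ⬝ᵥ (sympR ℂ n *ᵥ x) := by
  rw [Matrix.star_mulVec, Matrix.mulVec_mulVec, Matrix.dotProduct_mulVec,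
    Matrix.vecMul_vecMul, hH, ← Matrix.mul_assoc, hSc, ← Matrix.dotProduct_mulVec]

lemma half_e0 {n : ℕ} (j : Fin n) (h : (e0 j).val / 2 < n) :
    (⟨(e0 j).val / 2, h⟩ : Fin n) = j := Fin.ext (by simp)

lemma half_e1 {n : ℕ} (j : Fin n) (h : (e1 j).val / 2 < n) :
    (⟨(e1 j).val / 2, h⟩ : Fin n) = j := Fin.ext (by simp; omega)

lemma dot_diag {m : ℕ} (d v : Fin m → ℝ) :
    v ⬝ᵥ (Matrix.diagonal d *ᵥ v) = ∑ i, d i * v i ^ 2 := by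
  simp only [dotProduct, Matrix.mulVec_diagonal]
  exact Finset.sum_congr rfl fun i _ => by ring

lemma dot_lin {m : ℕ} (A B x : Fin m → ℂ) (c : ℂ) :
    (∑ l, (A l + c * B l) * x l) = (∑ l, A l * x l) + c * ∑ l, B l * x l := by
  rw [Finset.mul_sum, ← Finset.sum_add_distrib]
  exact Finset.sum_congr rfl fun l _ => by ring

lemma dot_sub_lin {m : ℕ} (A B x : Fin m → ℂ) (c : ℂ) :
    (∑ l, (A l - c * B l) * x l) = (∑ l, A l * x l) - c * ∑ l, B l * x l := by
  rw [Finset.mul_sum, ← Finset.sum_sub_distrib]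
  exact Finset.sum_congr rfl fun l _ => by ring

lemma dot_two {n : ℕ} (j : Fin n) (x : Fin (2 * n) → ℂ) :
    (∑ l, (if l = e0 j then (1 : ℂ) else if l = e1 j then -Complex.I else 0) * x l)
      = x (e0 j) - Complex.I * x (e1 j) := by
  have hne : e0 j ≠ e1 j := by
    intro h
    have : (e0 j).val = (e1 j).val := congrArg Fin.val h
    simp at this
  have hsplit : ∀ l : Fin (2 * n),
      (if l = e0 j then (1 : ℂ) else if l = e1 j then -Complex.I else 0) * x l
      = (if l = e0 j then x l else 0) + (if l = e1 j then -Complex.I * x l else 0) := by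
    intro l
    by_cases h0 : l = e0 j
    · rw [if_pos h0, if_pos h0, if_neg (by rw [h0]; exact hne), one_mul, add_zero]
    · rw [if_neg h0, if_neg h0]
      by_cases h1 : l = e1 j
      · rw [if_pos h1, if_pos h1, zero_add]
      · rw [if_neg h1, if_neg h1, zero_mul, add_zero]
  rw [Finset.sum_congr rfl fun l _ => hsplit l, Finset.sum_add_distrib,
    Finset.sum_ite_eq' Finset.univ (e0 j) (fun l => x l),
    Finset.sum_ite_eq' Finset.univ (e1 j) (fun l => -Complex.I * x l)]
  simp only [Finset.mem_univ, if_true]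
  ring

end SympAux

open SympAux

/-- If `S` is symplectic and `Sᵀ·c(r)·S - c(r') ≥ 0` for ordered squeezing vectors
`r₁ ≥ … ≥ r_n ≥ 0` and `r'₁ ≥ … ≥ r'_n ≥ 0`, then `r_k ≥ r'_k` for every `k`. -/
theorem symplectic_congruence_domination (n : ℕ) (hn : 1 ≤ n) (r r' : Fin n → ℝ)
    (hr : ∀ i j : Fin n, i ≤ j → r j ≤ r i) (hr0 : ∀ k, 0 ≤ r k)
    (hr' : ∀ i j : Fin n, i ≤ j → r' j ≤ r' i) (hr'0 : ∀ k, 0 ≤ r' k)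
    (S : Matrix (Fin (2 * n)) (Fin (2 * n)) ℝ)
    (hS : S * symp n * Sᵀ = symp n)
    (hpsd : (Sᵀ * cmat r * S - cmat r').PosSemidef) :
    ∀ k, r' k ≤ r k := by
  intro k
  classical
  have hkn := k.isLt
  -- cosh monotonicity helper
  have hcoshmono : ∀ a b : ℝ, 0 ≤ a → a ≤ b → Real.cosh a ≤ Real.cosh b := by
    intro a b ha hab
    rw [Real.cosh_le_cosh, abs_of_nonneg ha, abs_of_nonneg (le_trans ha hab)]
    exact hab
  -- complexification
  set Sc : Matrix (Fin (2 * n)) (Fin (2 * n)) ℂ := S.map (⇑Complex.ofRealHom) with hScdef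
  have hsympC : Scᵀ * sympR ℂ n * Sc = sympR ℂ n := by
    have h := transpose_symplectic S hS
    have h2 := congrArg
      (fun A : Matrix (Fin (2 * n)) (Fin (2 * n)) ℝ => A.map (⇑Complex.ofRealHom)) h
    simpa only [Matrix.map_mul, Matrix.transpose_map, symp_eq, sympR_map] using h2
  have hH : Scᴴ = Scᵀ := by
    ext i j
    simp [hScdef, Matrix.conjTranspose_apply, Matrix.map_apply]
  -- constraint matrix
  set Mc : Matrix (Fin (2 * n)) (Fin (2 * n)) ℂ := Matrix.of (fun i l =>
    if h : i.val < n then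
      if i.val < k.val then Sc (e0 ⟨i.val, h⟩) l - Complex.I * Sc (e1 ⟨i.val, h⟩) l
      else if i.val = k.val then 0
      else if l = e0 ⟨i.val, h⟩ then 1 else if l = e1 ⟨i.val, h⟩ then -Complex.I else 0
    else Sc (e0 ⟨i.val - n, by have := i.isLt; omega⟩) l
      + Complex.I * Sc (e1 ⟨i.val - n, by have := i.isLt; omega⟩) l) with hMc
  -- kernel vector
  obtain ⟨x, hx0, hxker⟩ : ∃ x : Fin (2 * n) → ℂ, x ≠ 0 ∧ Mc *ᵥ x = 0 := by
    have hzero : ∀ l, Mc (⟨k.val, by omega⟩ : Fin (2 * n)) l = 0 := by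
      intro l
      simp only [hMc, Matrix.of_apply]
      rw [dif_pos (show ((⟨k.val, by omega⟩ : Fin (2 * n)) : ℕ) < n from hkn)]
      rw [if_neg (lt_irrefl _)]
      simp
    have hrow0 : ∀ y : Fin (2 * n) → ℂ, Mc.mulVecLin y ⟨k.val, by omega⟩ = 0 := by
      intro y
      show ∑ l, Mc (⟨k.val, by omega⟩ : Fin (2 * n)) l * y l = 0
      simp [hzero]
    have hninj : ¬ Function.Injective Mc.mulVecLin := by
      intro hinj
      obtain ⟨y, hy⟩ := LinearMap.injective_iff_surjective.mp hinj
        (Pi.single (⟨k.val, by omega⟩ : Fin (2 * n)) 1)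
      have h1 := congrFun hy (⟨k.val, by omega⟩ : Fin (2 * n))
      rw [hrow0 y] at h1
      simp [Pi.single_eq_same] at h1
    obtain ⟨a, b, hab, hne⟩ := Function.not_injective_iff.mp hninj
    exact ⟨a - b, sub_ne_zero.mpr hne, by
      have := Mc.mulVecLin.map_sub a b
      rw [hab, sub_self] at this
      simpa [Matrix.mulVecLin_apply] using this⟩
  set z : Fin (2 * n) → ℂ := Sc *ᵥ x with hzdef
  have hmulrow : ∀ i : Fin (2 * n), (∑ l, Mc i l * x l) = 0 := fun i => congrFun hxker i
  -- extraction of constraints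
  have hb' : ∀ j : Fin n, z (e0 j) + Complex.I * z (e1 j) = 0 := by
    intro j
    have hjn := j.isLt
    have hlt : n + j.val < 2 * n := by omega
    have h : (∑ l, Mc ⟨n + j.val, hlt⟩ l * x l) = 0 := hmulrow _
    have hrow : ∀ l, Mc (⟨n + j.val, hlt⟩ : Fin (2 * n)) l
        = Sc (e0 j) l + Complex.I * Sc (e1 j) l := by
      intro l
      simp only [hMc, Matrix.of_apply]
      rw [dif_neg (show ¬(n + j.val < n) by omega)]
      simp only [show ((⟨n + j.val, hlt⟩ : Fin (2 * n)) : ℕ) = n + j.val from rfl,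
        Nat.add_sub_cancel_left, Fin.eta]
    have hsum : (∑ l, Mc (⟨n + j.val, hlt⟩ : Fin (2 * n)) l * x l)
        = ∑ l, (Sc (e0 j) l + Complex.I * Sc (e1 j) l) * x l :=
      Finset.sum_congr rfl fun l _ => by rw [hrow l]
    rw [hsum, dot_lin] at h
    exact h
  have ha'lt : ∀ j : Fin n, j.val < k.val → z (e0 j) - Complex.I * z (e1 j) = 0 := by
    intro j hj
    have hjn := j.isLt
    have hlt : j.val < 2 * n := by omega
    have h : (∑ l, Mc ⟨j.val, hlt⟩ l * x l) = 0 := hmulrow _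
    have hrow : ∀ l, Mc (⟨j.val, hlt⟩ : Fin (2 * n)) l
        = Sc (e0 j) l - Complex.I * Sc (e1 j) l := by
      intro l
      simp only [hMc, Matrix.of_apply]
      rw [dif_pos (show ((⟨j.val, hlt⟩ : Fin (2 * n)) : ℕ) < n from hjn)]
      rw [if_pos (show ((⟨j.val, hlt⟩ : Fin (2 * n)) : ℕ) < k.val from hj)]
    have hsum : (∑ l, Mc (⟨j.val, hlt⟩ : Fin (2 * n)) l * x l)
        = ∑ l, (Sc (e0 j) l - Complex.I * Sc (e1 j) l) * x l :=
      Finset.sum_congr rfl fun l _ => by rw [hrow l]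
    rw [hsum, dot_sub_lin] at h
    exact h
  have hagt : ∀ j : Fin n, k.val < j.val → x (e0 j) - Complex.I * x (e1 j) = 0 := by
    intro j hj
    have hjn := j.isLt
    have hlt : j.val < 2 * n := by omega
    have h : (∑ l, Mc ⟨j.val, hlt⟩ l * x l) = 0 := hmulrow _
    have hrow : ∀ l, Mc (⟨j.val, hlt⟩ : Fin (2 * n)) l
        = (if l = e0 j then (1 : ℂ) else if l = e1 j then -Complex.I else 0) := by
      intro l
      simp only [hMc, Matrix.of_apply]
      rw [dif_pos (show ((⟨j.val, hlt⟩ : Fin (2 * n)) : ℕ) < n from hjn)]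
      rw [if_neg ((by omega : ¬(j.val < k.val)) :
        ¬(((⟨j.val, hlt⟩ : Fin (2 * n)) : ℕ) < k.val))]
      rw [if_neg ((by omega : ¬(j.val = k.val)) :
        ¬(((⟨j.val, hlt⟩ : Fin (2 * n)) : ℕ) = k.val))]
    have hsum : (∑ l, Mc (⟨j.val, hlt⟩ : Fin (2 * n)) l * x l)
        = ∑ l, (if l = e0 j then (1 : ℂ) else if l = e1 j then -Complex.I else 0) * x l :=
      Finset.sum_congr rfl fun l _ => by rw [hrow l]
    rw [hsum, dot_two] at h
    exact h
  -- PSD quadratic form inequality over ℝ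
  have hq : ∀ v : Fin (2 * n) → ℝ,
      (∑ i : Fin (2 * n), Real.cosh (r' ⟨i.val / 2, by have := i.isLt; omega⟩) * v i ^ 2)
        ≤ ∑ i : Fin (2 * n), Real.cosh (r ⟨i.val / 2, by have := i.isLt; omega⟩)
            * (S *ᵥ v) i ^ 2 := by
    intro v
    have h := hpsd.dotProduct_mulVec_nonneg v
    rw [Matrix.sub_mulVec, dotProduct_sub, star_trivial] at h
    have h1 : v ⬝ᵥ ((Sᵀ * cmat r * S) *ᵥ v) = (S *ᵥ v) ⬝ᵥ (cmat r *ᵥ (S *ᵥ v)) := by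
      rw [← Matrix.mulVec_mulVec, ← Matrix.mulVec_mulVec, Matrix.dotProduct_mulVec,
        Matrix.vecMul_transpose]
    rw [h1] at h
    have h2 : (S *ᵥ v) ⬝ᵥ (cmat r *ᵥ (S *ᵥ v))
        = ∑ i : Fin (2 * n), Real.cosh (r ⟨i.val / 2, by have := i.isLt; omega⟩)
            * (S *ᵥ v) i ^ 2 :=
      dot_diag (fun i : Fin (2 * n) => Real.cosh (r ⟨i.val / 2, by have := i.isLt; omega⟩))
        (S *ᵥ v)
    have h3 : v ⬝ᵥ (cmat r' *ᵥ v)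
        = ∑ i : Fin (2 * n), Real.cosh (r' ⟨i.val / 2, by have := i.isLt; omega⟩) * v i ^ 2 :=
      dot_diag (fun i : Fin (2 * n) => Real.cosh (r' ⟨i.val / 2, by have := i.isLt; omega⟩)) v
    rw [h2, h3] at h
    linarith
  -- real and imaginary parts
  have hrez : ∀ i, (z i).re = (S *ᵥ (fun l => (x l).re)) i := by
    intro i
    show (∑ l, (S i l : ℂ) * x l).re = ∑ l, S i l * (x l).re
    rw [Complex.re_sum]
    exact Finset.sum_congr rfl fun l _ => by simp [Complex.mul_re]
  have himz : ∀ i, (z i).im = (S *ᵥ (fun l => (x l).im)) i := by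
    intro i
    show (∑ l, (S i l : ℂ) * x l).im = ∑ l, S i l * (x l).im
    rw [Complex.im_sum]
    exact Finset.sum_congr rfl fun l _ => by simp [Complex.mul_im]
  -- the PSD inequality in complex normSq form
  have hQBA : (∑ i : Fin (2 * n), Real.cosh (r' ⟨i.val / 2, by have := i.isLt; omega⟩)
        * Complex.normSq (x i))
      ≤ ∑ i : Fin (2 * n), Real.cosh (r ⟨i.val / 2, by have := i.isLt; omega⟩)
        * Complex.normSq (z i) := by
    have ha := hq (fun l => (x l).re)
    have hb := hq (fun l => (x l).im)
    have h5 : ∀ i : Fin (2 * n),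
        Real.cosh (r' ⟨i.val / 2, by have := i.isLt; omega⟩) * Complex.normSq (x i)
        = Real.cosh (r' ⟨i.val / 2, by have := i.isLt; omega⟩) * (x i).re ^ 2
          + Real.cosh (r' ⟨i.val / 2, by have := i.isLt; omega⟩) * (x i).im ^ 2 := by
      intro i; rw [Complex.normSq_apply]; ring
    have h6 : ∀ i : Fin (2 * n),
        Real.cosh (r ⟨i.val / 2, by have := i.isLt; omega⟩) * Complex.normSq (z i)
        = Real.cosh (r ⟨i.val / 2, by have := i.isLt; omega⟩)
            * (S *ᵥ fun l => (x l).re) i ^ 2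
          + Real.cosh (r ⟨i.val / 2, by have := i.isLt; omega⟩)
            * (S *ᵥ fun l => (x l).im) i ^ 2 := by
      intro i; rw [Complex.normSq_apply, hrez i, himz i]; ring
    calc (∑ i : Fin (2 * n), Real.cosh (r' ⟨i.val / 2, by have := i.isLt; omega⟩)
          * Complex.normSq (x i))
        = (∑ i : Fin (2 * n), Real.cosh (r' ⟨i.val / 2, by have := i.isLt; omega⟩)
            * (x i).re ^ 2)
          + ∑ i : Fin (2 * n), Real.cosh (r' ⟨i.val / 2, by have := i.isLt; omega⟩)
            * (x i).im ^ 2 := by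
          rw [← Finset.sum_add_distrib]; exact Finset.sum_congr rfl fun i _ => h5 i
      _ ≤ (∑ i : Fin (2 * n), Real.cosh (r ⟨i.val / 2, by have := i.isLt; omega⟩)
            * (S *ᵥ fun l => (x l).re) i ^ 2)
          + ∑ i : Fin (2 * n), Real.cosh (r ⟨i.val / 2, by have := i.isLt; omega⟩)
            * (S *ᵥ fun l => (x l).im) i ^ 2 := add_le_add ha hb
      _ = ∑ i : Fin (2 * n), Real.cosh (r ⟨i.val / 2, by have := i.isLt; omega⟩)
            * Complex.normSq (z i) := by
          rw [← Finset.sum_add_distrib]; exact Finset.sum_congr rfl fun i _ => (h6 i).symm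
  -- block forms
  have hQB_block : (∑ i : Fin (2 * n), Real.cosh (r' ⟨i.val / 2, by have := i.isLt; omega⟩)
        * Complex.normSq (x i))
      = ∑ j : Fin n, Real.cosh (r' j)
          * (Complex.normSq (x (e0 j)) + Complex.normSq (x (e1 j))) := by
    rw [sum_pair (f := fun i : Fin (2 * n) =>
      Real.cosh (r' ⟨i.val / 2, by have := i.isLt; omega⟩) * Complex.normSq (x i))]
    refine Finset.sum_congr rfl fun j _ => ?_
    simp only [half_e0, half_e1]
    ring
  have hQA_block : (∑ i : Fin (2 * n), Real.cosh (r ⟨i.val / 2, by have := i.isLt; omega⟩)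
        * Complex.normSq (z i))
      = ∑ j : Fin n, Real.cosh (r j)
          * (Complex.normSq (z (e0 j)) + Complex.normSq (z (e1 j))) := by
    rw [sum_pair (f := fun i : Fin (2 * n) =>
      Real.cosh (r ⟨i.val / 2, by have := i.isLt; omega⟩) * Complex.normSq (z i))]
    refine Finset.sum_congr rfl fun j _ => ?_
    simp only [half_e0, half_e1]
    ring
  set QB : ℝ := ∑ j : Fin n, Real.cosh (r' j)
      * (Complex.normSq (x (e0 j)) + Complex.normSq (x (e1 j))) with hQBdef
  set QA : ℝ := ∑ j : Fin n, Real.cosh (r j)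
      * (Complex.normSq (z (e0 j)) + Complex.normSq (z (e1 j))) with hQAdef
  have hBA : QB ≤ QA := by rw [← hQB_block, ← hQA_block]; exact hQBA
  -- symplectic forms
  set Ω : ℝ := ∑ j : Fin n, (Complex.normSq (x (e0 j) - Complex.I * x (e1 j))
      - Complex.normSq (x (e0 j) + Complex.I * x (e1 j))) with hΩdef
  set ΩZ : ℝ := ∑ j : Fin n, (Complex.normSq (z (e0 j) - Complex.I * z (e1 j))
      - Complex.normSq (z (e0 j) + Complex.I * z (e1 j))) with hΩZdef
  have hinv : ΩZ = Ω := by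
    have h := omega_invariant Sc hsympC hH x
    rw [← hzdef] at h
    rw [omega_block z, omega_block x] at h
    have hmul := congrArg (fun t : ℂ => 2 * t) h
    simp only [Finset.mul_sum] at hmul
    rw [Finset.sum_congr rfl (fun j _ => omega_pair (z (e0 j)) (z (e1 j))),
        Finset.sum_congr rfl (fun j _ => omega_pair (x (e0 j)) (x (e1 j)))] at hmul
    rw [← Finset.mul_sum, ← Finset.mul_sum] at hmul
    have hIne : (-Complex.I : ℂ) ≠ 0 := by simp [Complex.I_ne_zero]
    have hcan := mul_left_cancel₀ hIne hmul
    have hcast : ((ΩZ : ℝ) : ℂ) = ((Ω : ℝ) : ℂ) := by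
      rw [hΩZdef, hΩdef]
      push_cast
      exact hcan
    exact_mod_cast hcast
  -- upper bound for QA
  have hQA_le : 2 * QA ≤ Real.cosh (r k) * ΩZ := by
    have hZeq : ΩZ = ∑ j : Fin n, Complex.normSq (z (e0 j) - Complex.I * z (e1 j)) := by
      rw [hΩZdef]
      exact Finset.sum_congr rfl fun j _ => by rw [hb' j]; simp
    have h2QA : 2 * QA = ∑ j : Fin n, Real.cosh (r j)
        * Complex.normSq (z (e0 j) - Complex.I * z (e1 j)) := by
      rw [hQAdef, Finset.mul_sum]
      refine Finset.sum_congr rfl fun j _ => ?_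
      have hp := nsq_pair (z (e0 j)) (z (e1 j))
      have hb0 : Complex.normSq (z (e0 j) + Complex.I * z (e1 j)) = 0 := by rw [hb' j]; simp
      linear_combination (-Real.cosh (r j)) * hp + Real.cosh (r j) * hb0
    rw [h2QA, hZeq, Finset.mul_sum]
    refine Finset.sum_le_sum fun j _ => ?_
    by_cases hj : j.val < k.val
    · rw [ha'lt j hj]
      simp
    · have hkj : k ≤ j := by
        rw [Fin.le_def]; omega
      have hrj : r j ≤ r k := hr k j hkj
      exact mul_le_mul_of_nonneg_right (hcoshmono (r j) (r k) (hr0 j) hrj)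
        (Complex.normSq_nonneg _)
  -- lower bound for QB
  have hQB_ge : Real.cosh (r' k) * Ω ≤ 2 * QB := by
    have h2QB : 2 * QB = ∑ j : Fin n, Real.cosh (r' j)
        * (Complex.normSq (x (e0 j) - Complex.I * x (e1 j))
          + Complex.normSq (x (e0 j) + Complex.I * x (e1 j))) := by
      rw [hQBdef, Finset.mul_sum]
      refine Finset.sum_congr rfl fun j _ => ?_
      have hp := nsq_pair (x (e0 j)) (x (e1 j))
      linear_combination (-Real.cosh (r' j)) * hp
    rw [h2QB, hΩdef, Finset.mul_sum]
    refine Finset.sum_le_sum fun j _ => ?_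
    have hnn0 := Complex.normSq_nonneg (x (e0 j) - Complex.I * x (e1 j))
    have hnn1 := Complex.normSq_nonneg (x (e0 j) + Complex.I * x (e1 j))
    have hck := Real.cosh_pos (x := r' k)
    have hcj := Real.cosh_pos (x := r' j)
    by_cases hj : k.val < j.val
    · rw [hagt j hj]
      simp only [Complex.normSq_zero]
      nlinarith
    · have hjk : j ≤ k := by rw [Fin.le_def]; omega
      have hrj : r' k ≤ r' j := hr' j k hjk
      have hcc : Real.cosh (r' k) ≤ Real.cosh (r' j) :=
        hcoshmono (r' k) (r' j) (hr'0 k) hrj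
      nlinarith
  -- positivity of QB
  have hQB_pos : 0 < QB := by
    have h7 : (∑ j : Fin n, (Complex.normSq (x (e0 j)) + Complex.normSq (x (e1 j))))
        = ∑ i : Fin (2 * n), Complex.normSq (x i) :=
      (sum_pair (f := fun i => Complex.normSq (x i))).symm
    obtain ⟨i0, hi0⟩ := Function.ne_iff.mp hx0
    have h8 : 0 < ∑ i : Fin (2 * n), Complex.normSq (x i) :=
      Finset.sum_pos' (fun i _ => Complex.normSq_nonneg _)
        ⟨i0, Finset.mem_univ _, by simpa [Complex.normSq_pos] using hi0⟩
    have h9 : (∑ j : Fin n, (Complex.normSq (x (e0 j)) + Complex.normSq (x (e1 j)))) ≤ QB := by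
      rw [hQBdef]
      refine Finset.sum_le_sum fun j _ => ?_
      have := Real.one_le_cosh (r' j)
      nlinarith [Complex.normSq_nonneg (x (e0 j)), Complex.normSq_nonneg (x (e1 j))]
    linarith
  -- conclusion
  have h1 : Real.cosh (r k) * ΩZ = Real.cosh (r k) * Ω := by rw [hinv]
  have hchain : Real.cosh (r' k) * Ω ≤ Real.cosh (r k) * Ω := by
    linarith
  have h2 : 0 < Real.cosh (r k) * Ω := by linarith
  have hΩpos : 0 < Ω := by
    rcases mul_pos_iff.mp h2 with ⟨_, hΩ⟩ | ⟨hd, _⟩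
    · exact hΩ
    · linarith [Real.cosh_pos (x := r k)]
  have hfin : Real.cosh (r' k) ≤ Real.cosh (r k) :=
    le_of_mul_le_mul_right hchain hΩpos
  by_contra hcc
  push_neg at hcc
  have : Real.cosh (r k) < Real.cosh (r' k) := by
    rw [Real.cosh_lt_cosh, abs_of_nonneg (hr0 k), abs_of_nonneg (hr'0 k)]
    exact hcc
  linarith
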